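/- Let q ∈ L¹([0,1],ℝ), t ∈ (0,1), and let φ, ψ be solutions of −y'' + q y = 0 on [0,1] with φ(0) = 0, φ'(0) = 1, ψ(1) = 0, Wronskian W[φ,ψ] = ω ≠ 0, and suppose φ(t) ≠ 0 and ψ(t) ≠ 0. Then λ ∈ ℂ is a Dirichlet eigenvalue of the problem −y'' + q y = λ δ(x−t) y, y(0) = y(1) = 0, if and only if 1 + (λ/ω)·φ(t)ψ(t) = 0; hence the problem has the unique eigenvalue λ(t,q) = −ω/(φ(t)ψ(t)) ≠ 0. -/

import Mathlib

open Set MeasureTheory intervalIntegral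

/-- `y` is a real Carathéodory solution of `-y'' + q y = 0` on `[a,b]`. -/
def IsSolutionOn (q y y' : ℝ → ℝ) (a b : ℝ) : Prop :=
  (∀ x ∈ Set.Icc a b, HasDerivWithinAt y (y' x) (Set.Icc a b) x) ∧
  (∀ x ∈ Set.Icc a b, y' x = y' a + ∫ s in a..x, q s * y s)

/-- `l ∈ ℂ` is a Dirichlet eigenvalue of `-y'' + q y = l·δ(x - t)·y`,
`y(0) = y(1) = 0`:  there is a nontrivial `y ∈ AC[0,1]`, with `y'` absolutely
continuous on `[0,t]` and `[t,1]` (derivative functions `g₁, g₂` satisfying the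
integral form of `y'' = q y`), the jump condition
`y'(t⁻) - y'(t⁺) = l·y(t)` and `y(0) = y(1) = 0`. -/
def DiracEigen (q : ℝ → ℝ) (t : ℝ) (l : ℂ) : Prop :=
  ∃ y g₁ g₂ : ℝ → ℂ,
    ContinuousOn y (Set.Icc 0 1) ∧
    (∀ x ∈ Set.Icc 0 t, HasDerivWithinAt y (g₁ x) (Set.Icc 0 t) x) ∧
    (∀ x ∈ Set.Icc 0 t, g₁ x = g₁ 0 + ∫ s in (0:ℝ)..x, (q s : ℂ) * y s) ∧
    (∀ x ∈ Set.Icc t 1, HasDerivWithinAt y (g₂ x) (Set.Icc t 1) x) ∧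
    (∀ x ∈ Set.Icc t 1, g₂ x = g₂ t + ∫ s in t..x, (q s : ℂ) * y s) ∧
    g₁ t - g₂ t = l * y t ∧
    y 0 = 0 ∧ y 1 = 0 ∧
    (∃ x ∈ Set.Icc (0:ℝ) 1, y x ≠ 0)


lemma gronwall_left {a b : ℝ} (hab : a ≤ b) {k u : ℝ → ℝ}
    (hk : IntegrableOn k (Icc a b)) (hk0 : ∀ x ∈ Icc a b, 0 ≤ k x)
    (hu : ContinuousOn u (Icc a b)) (hu0 : ∀ x ∈ Icc a b, 0 ≤ u x)
    (hle : ∀ x ∈ Icc a b, u x ≤ ∫ s in a..x, k s * u s) :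
    ∀ x ∈ Icc a b, u x = 0 := by
  have hku : IntegrableOn (fun s => k s * u s) (Icc a b) :=
    hk.mul_continuousOn hu isCompact_Icc
  have hkuI : ∀ x ∈ Icc a b, ∀ y ∈ Icc a b, IntervalIntegrable (fun s => k s * u s) volume x y := by
    intro x hx y hy
    exact (hku.mono_set (uIcc_subset_Icc hx hy)).intervalIntegrable
  have hkI : ∀ x ∈ Icc a b, ∀ y ∈ Icc a b, IntervalIntegrable k volume x y := by
    intro x hx y hy
    exact (hk.mono_set (uIcc_subset_Icc hx hy)).intervalIntegrable
  set S : Set ℝ := {x | x ∈ Icc a b ∧ ∀ y ∈ Icc a x, u y = 0} with hS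
  have hua : u a = 0 := by
    have h1 := hle a (left_mem_Icc.2 hab)
    simp only [intervalIntegral.integral_same] at h1
    exact le_antisymm h1 (hu0 a (left_mem_Icc.2 hab))
  have haS : a ∈ S := ⟨left_mem_Icc.2 hab, fun y hy => by
    rcases Icc_self a ▸ hy with h; simp at h; simpa [h] using hua⟩
  have hSne : S.Nonempty := ⟨a, haS⟩
  have hSbdd : BddAbove S := ⟨b, fun x hx => hx.1.2⟩
  set c := sSup S with hc
  have hcab : c ∈ Icc a b := ⟨le_csSup hSbdd haS, csSup_le hSne fun x hx => hx.1.2⟩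
  have huc : ∀ y ∈ Icc a c, u y = 0 := by
    intro y hy
    rcases lt_or_eq_of_le hy.2 with hyc | hyc
    · obtain ⟨x, hxS, hyx⟩ := exists_lt_of_lt_csSup hSne hyc
      exact hxS.2 y ⟨hy.1, hyx.le⟩
    · have h1 := hle y ⟨hy.1, hyc ▸ hcab.2⟩
      have h2 : (∫ s in a..y, k s * u s) = 0 := by
        have hae : ∀ᵐ s ∂volume, s ∈ Set.uIoc a y → k s * u s = 0 := by
          have hne : ∀ᵐ s : ℝ ∂volume, s ≠ y := by
            rw [ae_iff]; simpa using measure_singleton y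
          filter_upwards [hne] with s hs hsmem
          rw [uIoc_of_le hy.1] at hsmem
          have : u s = 0 := by
            rcases lt_or_eq_of_le hsmem.2 with h | h
            · obtain ⟨x, hxS, hsx⟩ := exists_lt_of_lt_csSup hSne (hyc ▸ h)
              exact hxS.2 s ⟨hsmem.1.le, hsx.le⟩
            · exact absurd h hs
          simp [this]
        calc (∫ s in a..y, k s * u s) = ∫ s in a..y, (0:ℝ) :=
              intervalIntegral.integral_congr_ae hae
          _ = 0 := by simp
      rw [h2] at h1
      exact le_antisymm h1 (hu0 y ⟨hy.1, hyc ▸ hcab.2⟩)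
  have hcb : c = b := by
    by_contra hne
    have hclt : c < b := lt_of_le_of_ne hcab.2 hne
    -- choose d > c with small integral
    have hFcont : ContinuousOn (fun x => ∫ s in c..x, k s) (Icc c b) := by
      have : IntegrableOn k (uIcc c b) := hk.mono_set (by rw [uIcc_of_le hclt.le]; exact Icc_subset_Icc hcab.1 le_rfl)
      exact (intervalIntegral.continuousOn_primitive_interval this).mono (by rw [uIcc_of_le hclt.le])
    have htend : Filter.Tendsto (fun x => ∫ s in c..x, k s) (nhdsWithin c (Ioc c b)) (nhds 0) := by
      have h0 : (∫ s in c..c, k s) = 0 := intervalIntegral.integral_same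
      have := (hFcont c (left_mem_Icc.2 hclt.le)).mono Ioc_subset_Icc_self
      rw [ContinuousWithinAt, h0] at this
      exact this
    have hev : ∀ᶠ x in nhdsWithin c (Ioc c b), (∫ s in c..x, k s) < 1/2 :=
      htend (Iio_mem_nhds (by norm_num))
    have hmem : ∀ᶠ x in nhdsWithin c (Ioc c b), x ∈ Ioc c b := self_mem_nhdsWithin
    have hNB : (nhdsWithin c (Ioc c b)).NeBot := by
      rw [nhdsWithin_Ioc_eq_nhdsGT hclt]; infer_instance
    obtain ⟨d, hd1, hd2⟩ := (hev.and hmem).exists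
    have hdab : d ∈ Icc a b := ⟨hcab.1.trans hd2.1.le, hd2.2⟩
    obtain ⟨x₀, hx₀, hmax⟩ := isCompact_Icc.exists_isMaxOn (nonempty_Icc.2 hd2.1.le)
      (hu.mono (Icc_subset_Icc hcab.1 hd2.2))
    have hx₀ab : x₀ ∈ Icc a b := ⟨hcab.1.trans hx₀.1, hx₀.2.trans hd2.2⟩
    have hM0 : 0 ≤ u x₀ := hu0 x₀ hx₀ab
    have key : u x₀ ≤ (1/2) * u x₀ := by
      have h1 := hle x₀ hx₀ab
      have hsplit : (∫ s in a..x₀, k s * u s) =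
          (∫ s in a..c, k s * u s) + ∫ s in c..x₀, k s * u s :=
        (intervalIntegral.integral_add_adjacent_intervals
          (hkuI a (left_mem_Icc.2 hab) c hcab) (hkuI c hcab x₀ hx₀ab)).symm
      have hz : (∫ s in a..c, k s * u s) = 0 := by
        rw [intervalIntegral.integral_congr (g := fun _ => (0:ℝ))
          (fun s hs => by rw [uIcc_of_le hcab.1] at hs; simp [huc s hs])]
        simp
      have hb1 : (∫ s in c..x₀, k s * u s) ≤ ∫ s in c..x₀, k s * u x₀ := by
        apply intervalIntegral.integral_mono_on hx₀.1 (hkuI c hcab x₀ hx₀ab)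
          ((hkI c hcab x₀ hx₀ab).mul_const _)
        intro s hs
        have hsab : s ∈ Icc a b := ⟨hcab.1.trans hs.1, hs.2.trans hx₀ab.2⟩
        exact mul_le_mul_of_nonneg_left (hmax ⟨hs.1, hs.2.trans hx₀.2⟩) (hk0 s hsab)
      have hb2 : (∫ s in c..x₀, k s * u x₀) = (∫ s in c..x₀, k s) * u x₀ := by
        rw [intervalIntegral.integral_mul_const]
      have hb3 : (∫ s in c..x₀, k s) ≤ ∫ s in c..d, k s := by
        have : (∫ s in c..d, k s) = (∫ s in c..x₀, k s) + ∫ s in x₀..d, k s :=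
          (intervalIntegral.integral_add_adjacent_intervals
            (hkI c hcab x₀ hx₀ab) (hkI x₀ hx₀ab d hdab)).symm
        have hpos : 0 ≤ ∫ s in x₀..d, k s := by
          apply intervalIntegral.integral_nonneg hx₀.2
          intro s hs
          exact hk0 s ⟨hx₀ab.1.trans hs.1, hs.2.trans hdab.2⟩
        linarith
      calc u x₀ ≤ (∫ s in a..x₀, k s * u s) := h1
        _ = ∫ s in c..x₀, k s * u s := by rw [hsplit, hz, zero_add]
        _ ≤ (∫ s in c..x₀, k s) * u x₀ := hb2 ▸ hb1
        _ ≤ (∫ s in c..d, k s) * u x₀ := mul_le_mul_of_nonneg_right hb3 hM0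
        _ ≤ (1/2) * u x₀ := mul_le_mul_of_nonneg_right hd1.le hM0
    have hM : u x₀ = 0 := by linarith
    have hdS : d ∈ S := by
      refine ⟨hdab, fun y hy => ?_⟩
      rcases le_total y c with h | h
      · exact huc y ⟨hy.1, h⟩
      · have hyab : y ∈ Icc a b := ⟨hy.1, hy.2.trans hdab.2⟩
        have := hmax (⟨h, hy.2⟩ : y ∈ Icc c d)
        have : u y ≤ 0 := hM ▸ this
        exact le_antisymm this (hu0 y hyab)
    exact absurd (le_csSup hSbdd hdS) (not_le.2 hd2.1)
  intro x hx
  exact huc x ⟨hx.1, hcb ▸ hx.2⟩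

lemma gronwall_right {a b : ℝ} (hab : a ≤ b) {k u : ℝ → ℝ}
    (hk : IntegrableOn k (Icc a b)) (hk0 : ∀ x ∈ Icc a b, 0 ≤ k x)
    (hu : ContinuousOn u (Icc a b)) (hu0 : ∀ x ∈ Icc a b, 0 ≤ u x)
    (hle : ∀ x ∈ Icc a b, u x ≤ ∫ s in x..b, k s * u s) :
    ∀ x ∈ Icc a b, u x = 0 := by
  set r : ℝ → ℝ := fun x => a + b - x with hr
  have hrmem : ∀ x ∈ Icc a b, r x ∈ Icc a b := by
    intro x hx; constructor <;> simp [hr] <;> linarith [hx.1, hx.2]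
  have hrr : ∀ x, r (r x) = x := by intro x; simp [hr]
  have hK : IntegrableOn (fun x => k (r x)) (Icc a b) := by
    have h1 : IntervalIntegrable k volume a b :=
      (intervalIntegrable_iff_integrableOn_Icc_of_le hab).2 hk
    have h2 := h1.comp_sub_left (a + b)
    simp only [add_sub_cancel_right, add_sub_cancel_left] at h2
    exact (intervalIntegrable_iff_integrableOn_Icc_of_le hab).1 h2.symm
  have hrc : Continuous r := by continuity
  have hU : ContinuousOn (fun x => u (r x)) (Icc a b) :=
    hu.comp hrc.continuousOn (fun x hx => hrmem x hx)
  have key := gronwall_left hab hK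
    (fun x hx => hk0 _ (hrmem x hx)) hU (fun x hx => hu0 _ (hrmem x hx)) ?_
  · intro x hx
    have := key (r x) (hrmem x hx)
    rwa [hrr] at this
  · intro x hx
    have h1 := hle (r x) (hrmem x hx)
    have h2 : (∫ s in a..x, k (r s) * u (r s)) = ∫ s in r x..b, k s * u s := by
      have := intervalIntegral.integral_comp_sub_left (a := a) (b := x)
        (fun s => k s * u s) (a + b)
      simpa [hr, add_sub_cancel_left] using this
    rw [h2]; exact h1

lemma uniq_left {a b : ℝ} (hab : a ≤ b) {q : ℝ → ℝ} (hq : IntegrableOn q (Icc a b))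
    {z h : ℝ → ℂ} (hzc : ContinuousOn z (Icc a b)) (hhc : ContinuousOn h (Icc a b))
    (hz : ∀ x ∈ Icc a b, z x = ∫ s in a..x, h s)
    (hh : ∀ x ∈ Icc a b, h x = ∫ s in a..x, (q s : ℂ) * z s) :
    ∀ x ∈ Icc a b, z x = 0 ∧ h x = 0 := by
  set k : ℝ → ℝ := fun s => 2 * (1 + |q s|) with hk
  set u : ℝ → ℝ := fun s => ‖z s‖ + ‖h s‖ with hu
  have hkint : IntegrableOn k (Icc a b) := by
    apply Integrable.const_mul
    exact (integrable_const 1).add hq.norm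
  have hucont : ContinuousOn u (Icc a b) := (hzc.norm).add (hhc.norm)
  have hqn : IntegrableOn (fun s => |q s|) (Icc a b) := hq.norm
  have hqz : IntegrableOn (fun s => |q s| * ‖z s‖) (Icc a b) :=
    hqn.mul_continuousOn hzc.norm isCompact_Icc
  have hku : IntegrableOn (fun s => k s * u s) (Icc a b) :=
    hkint.mul_continuousOn hucont isCompact_Icc
  have main : ∀ x ∈ Icc a b, u x = 0 := by
    apply gronwall_left hab hkint (fun x _ => by positivity) hucont
      (fun x _ => by positivity)
    intro x hx
    have hIh : IntervalIntegrable (fun s => ‖h s‖) volume a x :=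
      (hhc.norm.mono (by rw [uIcc_of_le hx.1]; exact Icc_subset_Icc le_rfl hx.2)).intervalIntegrable
    have hIqz : IntervalIntegrable (fun s => |q s| * ‖z s‖) volume a x :=
      (hqz.mono_set (by rw [uIcc_of_le hx.1]; exact Icc_subset_Icc le_rfl hx.2)).intervalIntegrable
    have hIku : IntervalIntegrable (fun s => k s * u s) volume a x :=
      (hku.mono_set (by rw [uIcc_of_le hx.1]; exact Icc_subset_Icc le_rfl hx.2)).intervalIntegrable
    have h1 : ‖z x‖ ≤ ∫ s in a..x, ‖h s‖ := by
      rw [hz x hx]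
      exact intervalIntegral.norm_integral_le_integral_norm hx.1
    have h2 : ‖h x‖ ≤ ∫ s in a..x, |q s| * ‖z s‖ := by
      rw [hh x hx]
      refine (intervalIntegral.norm_integral_le_integral_norm hx.1).trans_eq ?_
      congr 1; ext s; simp [Complex.norm_real, Real.norm_eq_abs]
    calc u x ≤ (∫ s in a..x, ‖h s‖) + ∫ s in a..x, |q s| * ‖z s‖ := add_le_add h1 h2
      _ = ∫ s in a..x, (‖h s‖ + |q s| * ‖z s‖) := (intervalIntegral.integral_add hIh hIqz).symm
      _ ≤ ∫ s in a..x, k s * u s := by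
        apply intervalIntegral.integral_mono_on hx.1 (hIh.add hIqz) hIku
        intro s _
        have h3 : (0:ℝ) ≤ |q s| := abs_nonneg _
        have h4 : (0:ℝ) ≤ ‖z s‖ := norm_nonneg _
        have h5 : (0:ℝ) ≤ ‖h s‖ := norm_nonneg _
        simp only [hk, hu]
        nlinarith
  intro x hx
  have := main x hx
  have h4 : (0:ℝ) ≤ ‖z x‖ := norm_nonneg _
  have h5 : (0:ℝ) ≤ ‖h x‖ := norm_nonneg _
  constructor <;> [skip; skip] <;> rw [← norm_eq_zero] <;> simp only [hu] at this <;> linarith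

lemma uniq_right {a b : ℝ} (hab : a ≤ b) {q : ℝ → ℝ} (hq : IntegrableOn q (Icc a b))
    {z h : ℝ → ℂ} (hzc : ContinuousOn z (Icc a b)) (hhc : ContinuousOn h (Icc a b))
    (hz : ∀ x ∈ Icc a b, z x = ∫ s in b..x, h s)
    (hh : ∀ x ∈ Icc a b, h x = ∫ s in b..x, (q s : ℂ) * z s) :
    ∀ x ∈ Icc a b, z x = 0 ∧ h x = 0 := by
  set k : ℝ → ℝ := fun s => 2 * (1 + |q s|) with hk
  set u : ℝ → ℝ := fun s => ‖z s‖ + ‖h s‖ with hu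
  have hkint : IntegrableOn k (Icc a b) := by
    apply Integrable.const_mul
    exact (integrable_const 1).add hq.norm
  have hucont : ContinuousOn u (Icc a b) := (hzc.norm).add (hhc.norm)
  have hqn : IntegrableOn (fun s => |q s|) (Icc a b) := hq.norm
  have hqz : IntegrableOn (fun s => |q s| * ‖z s‖) (Icc a b) :=
    hqn.mul_continuousOn hzc.norm isCompact_Icc
  have hku : IntegrableOn (fun s => k s * u s) (Icc a b) :=
    hkint.mul_continuousOn hucont isCompact_Icc
  have main : ∀ x ∈ Icc a b, u x = 0 := by
    apply gronwall_right hab hkint (fun x _ => by positivity) hucont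
      (fun x _ => by positivity)
    intro x hx
    have hIh : IntervalIntegrable (fun s => ‖h s‖) volume x b :=
      (hhc.norm.mono (by rw [uIcc_of_le hx.2]; exact Icc_subset_Icc hx.1 le_rfl)).intervalIntegrable
    have hIqz : IntervalIntegrable (fun s => |q s| * ‖z s‖) volume x b :=
      (hqz.mono_set (by rw [uIcc_of_le hx.2]; exact Icc_subset_Icc hx.1 le_rfl)).intervalIntegrable
    have hIku : IntervalIntegrable (fun s => k s * u s) volume x b :=
      (hku.mono_set (by rw [uIcc_of_le hx.2]; exact Icc_subset_Icc hx.1 le_rfl)).intervalIntegrable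
    have h1 : ‖z x‖ ≤ ∫ s in x..b, ‖h s‖ := by
      rw [hz x hx, intervalIntegral.integral_symm, norm_neg]
      exact intervalIntegral.norm_integral_le_integral_norm hx.2
    have h2 : ‖h x‖ ≤ ∫ s in x..b, |q s| * ‖z s‖ := by
      rw [hh x hx, intervalIntegral.integral_symm, norm_neg]
      refine (intervalIntegral.norm_integral_le_integral_norm hx.2).trans_eq ?_
      congr 1; ext s; simp [Complex.norm_real, Real.norm_eq_abs]
    calc u x ≤ (∫ s in x..b, ‖h s‖) + ∫ s in x..b, |q s| * ‖z s‖ := add_le_add h1 h2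
      _ = ∫ s in x..b, (‖h s‖ + |q s| * ‖z s‖) := (intervalIntegral.integral_add hIh hIqz).symm
      _ ≤ ∫ s in x..b, k s * u s := by
        apply intervalIntegral.integral_mono_on hx.2 (hIh.add hIqz) hIku
        intro s _
        have h3 : (0:ℝ) ≤ |q s| := abs_nonneg _
        have h4 : (0:ℝ) ≤ ‖z s‖ := norm_nonneg _
        have h5 : (0:ℝ) ≤ ‖h s‖ := norm_nonneg _
        simp only [hk, hu]
        nlinarith
  intro x hx
  have := main x hx
  have h4 : (0:ℝ) ≤ ‖z x‖ := norm_nonneg _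
  have h5 : (0:ℝ) ≤ ‖h x‖ := norm_nonneg _
  constructor <;> [skip; skip] <;> rw [← norm_eq_zero] <;> simp only [hu] at this <;> linarith

lemma ftc_left {a b : ℝ} {y g : ℝ → ℂ}
    (hy : ∀ x ∈ Icc a b, HasDerivWithinAt y (g x) (Icc a b) x)
    (hg : ContinuousOn g (Icc a b)) :
    ∀ x ∈ Icc a b, y x = y a + ∫ s in a..x, g s := by
  have hyc : ContinuousOn y (Icc a b) := fun x hx => (hy x hx).continuousWithinAt
  intro x hx
  have hax : a ≤ x := hx.1
  have hint : IntervalIntegrable g volume a x :=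
    (hg.mono (by rw [uIcc_of_le hax]; exact Icc_subset_Icc le_rfl hx.2)).intervalIntegrable
  have := intervalIntegral.integral_eq_sub_of_hasDeriv_right_of_le hax
    (hyc.mono (Icc_subset_Icc le_rfl hx.2))
    (fun s hs => by
      have hsab : s ∈ Icc a b := ⟨hs.1.le, hs.2.le.trans hx.2⟩
      refine (hy s hsab).mono_of_mem_nhdsWithin ?_
      rw [mem_nhdsWithin]
      exact ⟨Iio b, isOpen_Iio, lt_of_lt_of_le hs.2 hx.2,
        fun w hw => ⟨(hsab.1.trans_lt hw.2).le, hw.1.le⟩⟩)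
    hint
  rw [this]; ring

lemma hdw_ofReal {f : ℝ → ℝ} {u x : ℝ} {s : Set ℝ} (hf : HasDerivWithinAt f u s x) :
    HasDerivWithinAt (fun y => ((f y : ℂ))) ((u : ℂ)) s x := by
  exact hf.ofReal_comp

lemma intInt_ofReal {a b : ℝ} {f : ℝ → ℝ} :
    (∫ x in a..b, ((f x : ℝ) : ℂ)) = ((∫ x in a..b, f x : ℝ) : ℂ) :=
  RCLike.intervalIntegral_ofReal

/-- For the single-Dirac-weight problem with `φ(t) ≠ 0 ≠ ψ(t)`:
`l` is a Dirichlet eigenvalue iff `1 + (l/ω)·φ(t)ψ(t) = 0`; hence the unique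
eigenvalue is `λ(t,q) = -ω/(φ(t)ψ(t)) ≠ 0`. -/
theorem stmt_6 (q φ ψ φ' ψ' : ℝ → ℝ) (t : ℝ) (ht : t ∈ Set.Ioo (0:ℝ) 1)
    (hq : MeasureTheory.IntegrableOn q (Set.Icc 0 1))
    (hφ : IsSolutionOn q φ φ' 0 1) (hψ : IsSolutionOn q ψ ψ' 0 1)
    (hφ0 : φ 0 = 0) (hφ'0 : φ' 0 = 1) (hψ1 : ψ 1 = 0)
    (ω : ℝ) (hω : ω ≠ 0)
    (hW : ∀ x ∈ Set.Icc (0:ℝ) 1, φ x * ψ' x - φ' x * ψ x = ω)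
    (hφt : φ t ≠ 0) (hψt : ψ t ≠ 0) :
    (∀ l : ℂ, DiracEigen q t l ↔ 1 + (l / (ω : ℂ)) * ((φ t : ℂ) * (ψ t : ℂ)) = 0) ∧
    (∀ l : ℂ, DiracEigen q t l ↔ l = -(ω : ℂ) / ((φ t : ℂ) * (ψ t : ℂ))) ∧
    -(ω : ℂ) / ((φ t : ℂ) * (ψ t : ℂ)) ≠ 0 := by
  obtain ⟨ht0, ht1⟩ := ht
  have h01 : (0:ℝ) ≤ 1 := zero_le_one
  have htI : t ∈ Icc (0:ℝ) 1 := ⟨ht0.le, ht1.le⟩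
  have hI0t : Icc (0:ℝ) t ⊆ Icc 0 1 := Icc_subset_Icc le_rfl ht1.le
  have hIt1 : Icc t (1:ℝ) ⊆ Icc 0 1 := Icc_subset_Icc ht0.le le_rfl
  obtain ⟨hφd, hφi⟩ := hφ
  obtain ⟨hψd, hψi⟩ := hψ
  have hφc : ContinuousOn φ (Icc 0 1) := fun x hx => (hφd x hx).continuousWithinAt
  have hψc : ContinuousOn ψ (Icc 0 1) := fun x hx => (hψd x hx).continuousWithinAt
  have hqφ : IntegrableOn (fun s => q s * φ s) (Icc 0 1) := hq.mul_continuousOn hφc isCompact_Icc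
  have hqψ : IntegrableOn (fun s => q s * ψ s) (Icc 0 1) := hq.mul_continuousOn hψc isCompact_Icc
  have hφ'c : ContinuousOn φ' (Icc 0 1) := by
    have hprim := intervalIntegral.continuousOn_primitive_interval
      (f := fun s => q s * φ s) (a := (0:ℝ)) (b := (1:ℝ)) (μ := volume)
      (by rw [uIcc_of_le h01]; exact hqφ)
    rw [uIcc_of_le h01] at hprim
    exact (continuousOn_const.add hprim).congr (fun x hx => hφi x hx)
  have hψ'c : ContinuousOn ψ' (Icc 0 1) := by
    have hprim := intervalIntegral.continuousOn_primitive_interval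
      (f := fun s => q s * ψ s) (a := (0:ℝ)) (b := (1:ℝ)) (μ := volume)
      (by rw [uIcc_of_le h01]; exact hqψ)
    rw [uIcc_of_le h01] at hprim
    exact (continuousOn_const.add hprim).congr (fun x hx => hψi x hx)
  have hW1 : φ 1 * ψ' 1 = ω := by have := hW 1 (right_mem_Icc.2 h01); rw [hψ1] at this; linarith
  have hφ1 : φ 1 ≠ 0 := fun h => hω (by rw [← hW1, h, zero_mul])
  have hψ'1 : ψ' 1 ≠ 0 := fun h => hω (by rw [← hW1, h, mul_zero])
  have hφtC : (φ t : ℂ) ≠ 0 := Complex.ofReal_ne_zero.2 hφt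
  have hψtC : (ψ t : ℂ) ≠ 0 := Complex.ofReal_ne_zero.2 hψt
  have hωC : (ω : ℂ) ≠ 0 := Complex.ofReal_ne_zero.2 hω
  -- the core equivalence
  have core : ∀ l : ℂ, DiracEigen q t l ↔ l * ((φ t : ℂ) * (ψ t : ℂ)) = -(ω : ℂ) := by
    intro l
    constructor
    · rintro ⟨y, g₁, g₂, hyc, hyd1, hg1i, hyd2, hg2i, hjump, hy0, hy1, x₀, hx₀, hyx₀⟩
      have hqC : IntegrableOn (fun s => ((q s : ℝ) : ℂ)) (Icc 0 1) := hq.ofReal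
      have hqyC : IntegrableOn (fun s => (q s : ℂ) * y s) (Icc 0 1) :=
        hqC.mul_continuousOn hyc isCompact_Icc
      have hΦc : ContinuousOn (fun x => ((φ x : ℝ) : ℂ)) (Icc 0 1) :=
        Complex.continuous_ofReal.comp_continuousOn hφc
      have hΨc : ContinuousOn (fun x => ((ψ x : ℝ) : ℂ)) (Icc 0 1) :=
        Complex.continuous_ofReal.comp_continuousOn hψc
      have hΦ'c : ContinuousOn (fun x => ((φ' x : ℝ) : ℂ)) (Icc 0 1) :=
        Complex.continuous_ofReal.comp_continuousOn hφ'c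
      have hΨ'c : ContinuousOn (fun x => ((ψ' x : ℝ) : ℂ)) (Icc 0 1) :=
        Complex.continuous_ofReal.comp_continuousOn hψ'c
      have hg1c : ContinuousOn g₁ (Icc 0 t) := by
        have hprim := intervalIntegral.continuousOn_primitive_interval
          (f := fun s => (q s : ℂ) * y s) (a := (0:ℝ)) (b := t) (μ := volume)
          (by rw [uIcc_of_le ht0.le]; exact hqyC.mono_set hI0t)
        rw [uIcc_of_le ht0.le] at hprim
        exact (continuousOn_const.add hprim).congr hg1i
      have hg2c : ContinuousOn g₂ (Icc t 1) := by
        have hprim := intervalIntegral.continuousOn_primitive_interval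
          (f := fun s => (q s : ℂ) * y s) (a := t) (b := (1:ℝ)) (μ := volume)
          (by rw [uIcc_of_le ht1.le]; exact hqyC.mono_set hIt1)
        rw [uIcc_of_le ht1.le] at hprim
        exact (continuousOn_const.add hprim).congr hg2i
      -- left interval analysis
      set c := g₁ 0 with hcdef
      have hΦint : ∀ x ∈ Icc (0:ℝ) 1,
          ((φ x : ℝ) : ℂ) = ((φ 0 : ℝ) : ℂ) + ∫ s in (0:ℝ)..x, ((φ' s : ℝ) : ℂ) :=
        ftc_left (fun x hx => hdw_ofReal (hφd x hx)) hΦ'c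
      have hyint1 : ∀ x ∈ Icc (0:ℝ) t, y x = y 0 + ∫ s in (0:ℝ)..x, g₁ s :=
        ftc_left hyd1 hg1c
      have hzint : ∀ x ∈ Icc (0:ℝ) t,
          y x - c * ((φ x : ℝ) : ℂ) = ∫ s in (0:ℝ)..x, (g₁ s - c * ((φ' s : ℝ) : ℂ)) := by
        intro x hx
        have i1 : IntervalIntegrable g₁ volume 0 x :=
          (hg1c.mono (by rw [uIcc_of_le hx.1]; exact Icc_subset_Icc le_rfl hx.2)).intervalIntegrable
        have i2 : IntervalIntegrable (fun s => ((φ' s : ℝ) : ℂ)) volume 0 x :=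
          (hΦ'c.mono (by
            rw [uIcc_of_le hx.1]
            exact Icc_subset_Icc le_rfl (hx.2.trans ht1.le))).intervalIntegrable
        rw [intervalIntegral.integral_sub i1 (i2.const_mul c),
          intervalIntegral.integral_const_mul, hyint1 x hx, hΦint x (hI0t hx), hy0, hφ0]
        push_cast; ring
      have hhint : ∀ x ∈ Icc (0:ℝ) t,
          g₁ x - c * ((φ' x : ℝ) : ℂ)
            = ∫ s in (0:ℝ)..x, (q s : ℂ) * (y s - c * ((φ s : ℝ) : ℂ)) := by
        intro x hx
        have h1 := hg1i x hx
        have h2 := hφi x (hI0t hx)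
        have iqy : IntervalIntegrable (fun s => (q s : ℂ) * y s) volume 0 x :=
          (hqyC.mono_set (by
            rw [uIcc_of_le hx.1]
            exact Icc_subset_Icc le_rfl (hx.2.trans ht1.le))).intervalIntegrable
        have hqφC : IntegrableOn (fun s => ((q s * φ s : ℝ) : ℂ)) (Icc 0 1) := hqφ.ofReal
        have iqΦ : IntervalIntegrable (fun s => ((q s * φ s : ℝ) : ℂ)) volume 0 x :=
          (hqφC.mono_set (by
            rw [uIcc_of_le hx.1]
            exact Icc_subset_Icc le_rfl (hx.2.trans ht1.le))).intervalIntegrable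
        have h3 : (∫ s in (0:ℝ)..x, (q s : ℂ) * (y s - c * ((φ s : ℝ) : ℂ)))
            = (∫ s in (0:ℝ)..x, (q s : ℂ) * y s)
              - c * (((∫ s in (0:ℝ)..x, q s * φ s : ℝ)) : ℂ) := by
          rw [← intInt_ofReal, ← intervalIntegral.integral_const_mul,
            ← intervalIntegral.integral_sub iqy (iqΦ.const_mul c)]
          apply intervalIntegral.integral_congr
          intro s _
          show (q s : ℂ) * (y s - c * ((φ s : ℝ) : ℂ))
            = (q s : ℂ) * y s - c * ((q s * φ s : ℝ) : ℂ)
          push_cast; ring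
        rw [h3]
        have h2C : (((∫ s in (0:ℝ)..x, q s * φ s : ℝ)) : ℂ) = ((φ' x : ℝ) : ℂ) - 1 := by
          have : (∫ s in (0:ℝ)..x, q s * φ s) = φ' x - 1 := by rw [h2, hφ'0]; ring
          rw [this]; push_cast; ring
        have h1' : (∫ s in (0:ℝ)..x, (q s : ℂ) * y s) = g₁ x - c := by
          rw [h1]; ring
        rw [h2C, h1']; ring
      have hzc : ContinuousOn (fun x => y x - c * ((φ x : ℝ) : ℂ)) (Icc 0 t) :=
        (hyc.mono hI0t).sub ((continuousOn_const.mul hΦc).mono hI0t)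
      have hhc : ContinuousOn (fun x => g₁ x - c * ((φ' x : ℝ) : ℂ)) (Icc 0 t) :=
        hg1c.sub ((continuousOn_const.mul hΦ'c).mono hI0t)
      have hleft := uniq_left ht0.le (hq.mono_set hI0t) hzc hhc hzint hhint
      have hytl : y t = c * ((φ t : ℝ) : ℂ) := by
        exact sub_eq_zero.1 (hleft t (right_mem_Icc.2 ht0.le)).1
      have hg1t : g₁ t = c * ((φ' t : ℝ) : ℂ) :=
        sub_eq_zero.1 (hleft t (right_mem_Icc.2 ht0.le)).2
      have hyzl : ∀ x ∈ Icc (0:ℝ) t, y x = c * ((φ x : ℝ) : ℂ) :=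
        fun x hx => sub_eq_zero.1 (hleft x hx).1
      -- right interval analysis
      have hψ'1C : ((ψ' 1 : ℝ) : ℂ) ≠ 0 := Complex.ofReal_ne_zero.2 hψ'1
      set d := g₂ 1 / ((ψ' 1 : ℝ) : ℂ) with hddef
      have hd : d * ((ψ' 1 : ℝ) : ℂ) = g₂ 1 := div_mul_cancel₀ _ hψ'1C
      have hyint2 : ∀ x ∈ Icc t (1:ℝ), y x = y t + ∫ s in t..x, g₂ s :=
        ftc_left hyd2 hg2c
      have ig2 : ∀ x ∈ Icc t (1:ℝ), ∀ z ∈ Icc t (1:ℝ), IntervalIntegrable g₂ volume x z :=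
        fun x hx z hz => (hg2c.mono (uIcc_subset_Icc hx hz)).intervalIntegrable
      have h1mem : (1:ℝ) ∈ Icc t 1 := right_mem_Icc.2 ht1.le
      have htmem : t ∈ Icc t (1:ℝ) := left_mem_Icc.2 ht1.le
      have hyanch : ∀ x ∈ Icc t (1:ℝ), y x = y 1 + ∫ s in (1:ℝ)..x, g₂ s := by
        intro x hx
        have hadd := intervalIntegral.integral_add_adjacent_intervals
          (ig2 t htmem 1 h1mem) (ig2 1 h1mem x hx)
        rw [hyint2 x hx, hyint2 1 h1mem, ← hadd]; ring
      have hΨint0 : ∀ x ∈ Icc (0:ℝ) 1,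
          ((ψ x : ℝ) : ℂ) = ((ψ 0 : ℝ) : ℂ) + ∫ s in (0:ℝ)..x, ((ψ' s : ℝ) : ℂ) :=
        ftc_left (fun x hx => hdw_ofReal (hψd x hx)) hΨ'c
      have iΨ' : ∀ x ∈ Icc (0:ℝ) 1, ∀ z ∈ Icc (0:ℝ) 1,
          IntervalIntegrable (fun s => ((ψ' s : ℝ) : ℂ)) volume x z :=
        fun x hx z hz => (hΨ'c.mono (uIcc_subset_Icc hx hz)).intervalIntegrable
      have h1mem' : (1:ℝ) ∈ Icc (0:ℝ) 1 := right_mem_Icc.2 h01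
      have h0mem' : (0:ℝ) ∈ Icc (0:ℝ) 1 := left_mem_Icc.2 h01
      have hΨanch : ∀ x ∈ Icc (0:ℝ) 1,
          ((ψ x : ℝ) : ℂ) = ((ψ 1 : ℝ) : ℂ) + ∫ s in (1:ℝ)..x, ((ψ' s : ℝ) : ℂ) := by
        intro x hx
        have hadd := intervalIntegral.integral_add_adjacent_intervals
          (iΨ' 0 h0mem' 1 h1mem') (iΨ' 1 h1mem' x hx)
        rw [hΨint0 x hx, hΨint0 1 h1mem', ← hadd]; ring
      have iqψ : ∀ x ∈ Icc (0:ℝ) 1, ∀ z ∈ Icc (0:ℝ) 1,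
          IntervalIntegrable (fun s => q s * ψ s) volume x z :=
        fun x hx z hz => (hqψ.mono_set (uIcc_subset_Icc hx hz)).intervalIntegrable
      have hψ'anch : ∀ x ∈ Icc (0:ℝ) 1, ψ' x = ψ' 1 + ∫ s in (1:ℝ)..x, q s * ψ s := by
        intro x hx
        have hadd := intervalIntegral.integral_add_adjacent_intervals
          (iqψ 0 h0mem' 1 h1mem') (iqψ 1 h1mem' x hx)
        rw [hψi x hx, hψi 1 h1mem', ← hadd]; ring
      have iqy : ∀ x ∈ Icc (0:ℝ) 1, ∀ z ∈ Icc (0:ℝ) 1,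
          IntervalIntegrable (fun s => (q s : ℂ) * y s) volume x z :=
        fun x hx z hz => (hqyC.mono_set (uIcc_subset_Icc hx hz)).intervalIntegrable
      have hg2anch : ∀ x ∈ Icc t (1:ℝ), g₂ x = g₂ 1 + ∫ s in (1:ℝ)..x, (q s : ℂ) * y s := by
        intro x hx
        have hadd := intervalIntegral.integral_add_adjacent_intervals
          (iqy t htI 1 h1mem') (iqy 1 h1mem' x (hIt1 hx))
        rw [hg2i x hx, hg2i 1 h1mem, ← hadd]; ring
      have hz2int : ∀ x ∈ Icc t (1:ℝ),
          y x - d * ((ψ x : ℝ) : ℂ) = ∫ s in (1:ℝ)..x, (g₂ s - d * ((ψ' s : ℝ) : ℂ)) := by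
        intro x hx
        rw [intervalIntegral.integral_sub (ig2 1 h1mem x hx)
            ((iΨ' 1 h1mem' x (hIt1 hx)).const_mul d),
          intervalIntegral.integral_const_mul, hyanch x hx, hΨanch x (hIt1 hx), hy1, hψ1]
        push_cast; ring
      have hh2int : ∀ x ∈ Icc t (1:ℝ),
          g₂ x - d * ((ψ' x : ℝ) : ℂ)
            = ∫ s in (1:ℝ)..x, (q s : ℂ) * (y s - d * ((ψ s : ℝ) : ℂ)) := by
        intro x hx
        have hqψC : IntegrableOn (fun s => ((q s * ψ s : ℝ) : ℂ)) (Icc 0 1) := hqψ.ofReal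
        have iqψC : IntervalIntegrable (fun s => ((q s * ψ s : ℝ) : ℂ)) volume 1 x :=
          (hqψC.mono_set (uIcc_subset_Icc h1mem' (hIt1 hx))).intervalIntegrable
        have h3 : (∫ s in (1:ℝ)..x, (q s : ℂ) * (y s - d * ((ψ s : ℝ) : ℂ)))
            = (∫ s in (1:ℝ)..x, (q s : ℂ) * y s)
              - d * (((∫ s in (1:ℝ)..x, q s * ψ s : ℝ)) : ℂ) := by
          rw [← intInt_ofReal, ← intervalIntegral.integral_const_mul,
            ← intervalIntegral.integral_sub (iqy 1 h1mem' x (hIt1 hx)) (iqψC.const_mul d)]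
          apply intervalIntegral.integral_congr
          intro s _
          show (q s : ℂ) * (y s - d * ((ψ s : ℝ) : ℂ))
            = (q s : ℂ) * y s - d * ((q s * ψ s : ℝ) : ℂ)
          push_cast; ring
        rw [h3]
        have h2C : (((∫ s in (1:ℝ)..x, q s * ψ s : ℝ)) : ℂ)
            = ((ψ' x : ℝ) : ℂ) - ((ψ' 1 : ℝ) : ℂ) := by
          have : (∫ s in (1:ℝ)..x, q s * ψ s) = ψ' x - ψ' 1 := by
            rw [hψ'anch x (hIt1 hx)]; ring
          rw [this]; push_cast; ring
        have h1' : (∫ s in (1:ℝ)..x, (q s : ℂ) * y s) = g₂ x - g₂ 1 := by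
          rw [hg2anch x hx]; ring
        rw [h2C, h1']
        have : d * ((ψ' 1 : ℝ) : ℂ) = g₂ 1 := hd
        linear_combination -this
      have hz2c : ContinuousOn (fun x => y x - d * ((ψ x : ℝ) : ℂ)) (Icc t 1) :=
        (hyc.mono hIt1).sub ((continuousOn_const.mul hΨc).mono hIt1)
      have hh2c : ContinuousOn (fun x => g₂ x - d * ((ψ' x : ℝ) : ℂ)) (Icc t 1) :=
        hg2c.sub ((continuousOn_const.mul hΨ'c).mono hIt1)
      have hright := uniq_right ht1.le (hq.mono_set hIt1) hz2c hh2c hz2int hh2int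
      have hytr : y t = d * ((ψ t : ℝ) : ℂ) := sub_eq_zero.1 (hright t htmem).1
      have hg2t : g₂ t = d * ((ψ' t : ℝ) : ℂ) := sub_eq_zero.1 (hright t htmem).2
      have hyzr : ∀ x ∈ Icc t (1:ℝ), y x = d * ((ψ x : ℝ) : ℂ) :=
        fun x hx => sub_eq_zero.1 (hright x hx).1
      -- nontriviality gives c ≠ 0
      have hcne : c ≠ 0 := by
        intro hc0
        have hd0 : d = 0 := by
          have : d * ((ψ t : ℝ) : ℂ) = 0 := by rw [← hytr, hytl, hc0, zero_mul]
          exact (mul_eq_zero.1 this).resolve_right hψtC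
        apply hyx₀
        rcases le_total x₀ t with h | h
        · rw [hyzl x₀ ⟨hx₀.1, h⟩, hc0, zero_mul]
        · rw [hyzr x₀ ⟨h, hx₀.2⟩, hd0, zero_mul]
      -- final algebra
      have e1 : c * ((φ t : ℝ) : ℂ) = d * ((ψ t : ℝ) : ℂ) := hytl.symm.trans hytr
      have e2 : c * ((φ' t : ℝ) : ℂ) - d * ((ψ' t : ℝ) : ℂ) = l * (c * ((φ t : ℝ) : ℂ)) := by
        rw [← hg1t, ← hg2t, ← hytl]; exact hjump
      have e3 : ((φ t : ℝ) : ℂ) * ((ψ' t : ℝ) : ℂ) - ((φ' t : ℝ) : ℂ) * ((ψ t : ℝ) : ℂ)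
          = ((ω : ℝ) : ℂ) := by
        have := congrArg (fun r : ℝ => (r : ℂ)) (hW t htI)
        push_cast at this
        exact this
      have key : c * (l * (((φ t : ℝ) : ℂ) * ((ψ t : ℝ) : ℂ))) = c * (-((ω : ℝ) : ℂ)) := by
        linear_combination ((ψ' t : ℝ) : ℂ) * e1 - ((ψ t : ℝ) : ℂ) * e2 - c * e3
      exact mul_left_cancel₀ hcne key
    · intro hl
      classical
      set y : ℝ → ℂ := fun x => if x ≤ t then (ψ t : ℂ) * (φ x : ℂ) else (φ t : ℂ) * (ψ x : ℂ)
        with hydef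
      have e1 : EqOn y (fun x => (ψ t : ℂ) * (φ x : ℂ)) (Icc 0 t) := fun x hx => if_pos hx.2
      have e2 : EqOn y (fun x => (φ t : ℂ) * (ψ x : ℂ)) (Icc t 1) := by
        intro x hx
        by_cases h : x ≤ t
        · have hxt : x = t := le_antisymm h hx.1
          subst hxt
          simp only [hydef, if_pos le_rfl]; ring
        · simp only [hydef, if_neg h]
      have hΦc : ContinuousOn (fun x => ((φ x : ℝ) : ℂ)) (Icc 0 1) :=
        Complex.continuous_ofReal.comp_continuousOn hφc
      have hΨc : ContinuousOn (fun x => ((ψ x : ℝ) : ℂ)) (Icc 0 1) :=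
        Complex.continuous_ofReal.comp_continuousOn hψc
      refine ⟨y, fun x => (ψ t : ℂ) * (φ' x : ℂ), fun x => (φ t : ℂ) * (ψ' x : ℂ),
        ?_, ?_, ?_, ?_, ?_, ?_, ?_, ?_, ?_⟩
      · -- continuity
        apply ContinuousOn.if
        · intro a ha
          have hat : a = t := by
            have h2 := ha.2
            rw [show {a : ℝ | a ≤ t} = Iic t from rfl, frontier_Iic] at h2
            exact h2
          subst hat; ring
        · have hs : Icc (0:ℝ) 1 ∩ closure {a : ℝ | a ≤ t} = Icc 0 t := by
            rw [show {a : ℝ | a ≤ t} = Iic t from rfl, closure_Iic]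
            ext x
            simp only [mem_inter_iff, mem_Icc, mem_Iic]
            constructor
            · rintro ⟨⟨h1, _⟩, h3⟩; exact ⟨h1, h3⟩
            · rintro ⟨h1, h2⟩; exact ⟨⟨h1, h2.trans ht1.le⟩, h2⟩
          rw [hs]
          exact (continuousOn_const.mul hΦc).mono hI0t
        · have hs : Icc (0:ℝ) 1 ∩ closure {a : ℝ | ¬ a ≤ t} = Icc t 1 := by
            rw [show {a : ℝ | ¬ a ≤ t} = Ioi t from by ext x; simp [not_le], closure_Ioi]
            ext x
            simp only [mem_inter_iff, mem_Icc, mem_Ici]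
            constructor
            · rintro ⟨⟨_, h2⟩, h3⟩; exact ⟨h3, h2⟩
            · rintro ⟨h1, h2⟩; exact ⟨⟨ht0.le.trans h1, h2⟩, h1⟩
          rw [hs]
          exact (continuousOn_const.mul hΨc).mono hIt1
      · -- derivative on [0,t]
        intro x hx
        exact (((hdw_ofReal (hφd x (hI0t hx))).mono hI0t).const_mul ((ψ t : ℂ))).congr e1
          (e1 hx)
      · -- g₁ integral identity
        intro x hx
        have h1 := hφi x (hI0t hx)
        have h2 : (∫ s in (0:ℝ)..x, (q s : ℂ) * y s)
            = (ψ t : ℂ) * (((∫ s in (0:ℝ)..x, q s * φ s : ℝ)) : ℂ) := by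
          rw [← intInt_ofReal, ← intervalIntegral.integral_const_mul]
          apply intervalIntegral.integral_congr
          intro s hs
          rw [uIcc_of_le hx.1] at hs
          show (q s : ℂ) * y s = (ψ t : ℂ) * ((q s * φ s : ℝ) : ℂ)
          rw [e1 ⟨hs.1, hs.2.trans hx.2⟩]
          push_cast; ring
        rw [h2]; simp only [h1]; push_cast; ring
      · -- derivative on [t,1]
        intro x hx
        exact (((hdw_ofReal (hψd x (hIt1 hx))).mono hIt1).const_mul ((φ t : ℂ))).congr e2
          (e2 hx)
      · -- g₂ integral identity
        intro x hx
        have h1 := hψi x (hIt1 hx)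
        have h1t := hψi t htI
        have int1 : IntervalIntegrable (fun s => q s * ψ s) volume 0 t :=
          (hqψ.mono_set (by rw [uIcc_of_le ht0.le]; exact hI0t)).intervalIntegrable
        have int2 : IntervalIntegrable (fun s => q s * ψ s) volume t x :=
          (hqψ.mono_set (by
            rw [uIcc_of_le hx.1]; exact Icc_subset_Icc ht0.le hx.2)).intervalIntegrable
        have hsplit : (∫ s in (0:ℝ)..x, q s * ψ s)
            = (∫ s in (0:ℝ)..t, q s * ψ s) + ∫ s in t..x, q s * ψ s :=
          (intervalIntegral.integral_add_adjacent_intervals int1 int2).symm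
        have h3 : ψ' x = ψ' t + ∫ s in t..x, q s * ψ s := by
          rw [h1, h1t, hsplit]; ring
        have h2 : (∫ s in t..x, (q s : ℂ) * y s)
            = (φ t : ℂ) * (((∫ s in t..x, q s * ψ s : ℝ)) : ℂ) := by
          rw [← intInt_ofReal, ← intervalIntegral.integral_const_mul]
          apply intervalIntegral.integral_congr
          intro s hs
          rw [uIcc_of_le hx.1] at hs
          show (q s : ℂ) * y s = (φ t : ℂ) * ((q s * ψ s : ℝ) : ℂ)
          rw [e2 ⟨hs.1, hs.2.trans hx.2⟩]
          push_cast; ring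
        rw [h2]; simp only [h3]; push_cast; ring
      · -- jump condition
        have hyt : y t = (ψ t : ℂ) * (φ t : ℂ) := e1 (right_mem_Icc.2 ht0.le)
        rw [hyt]
        have hWt : ((φ t * ψ' t - φ' t * ψ t : ℝ) : ℂ) = ((ω : ℝ) : ℂ) := by
          exact_mod_cast congrArg (fun r : ℝ => (r : ℂ)) (hW t htI)
        push_cast at hWt
        linear_combination -hWt - hl
      · -- y 0 = 0
        simp only [hydef, if_pos ht0.le, hφ0]
        simp
      · -- y 1 = 0
        simp only [hydef, if_neg (not_le.2 ht1), hψ1]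
        simp
      · -- nontrivial
        refine ⟨t, htI, ?_⟩
        rw [e1 (right_mem_Icc.2 ht0.le)]
        exact mul_ne_zero hψtC hφtC
  refine ⟨fun l => (core l).trans ⟨fun h => ?_, fun h => ?_⟩,
    fun l => (core l).trans ⟨fun h => ?_, fun h => ?_⟩, ?_⟩
  · field_simp
    linear_combination h
  · field_simp at h
    linear_combination h
  · field_simp
    linear_combination h
  · field_simp at h ⊢
    linear_combination h
  · intro h
    rw [div_eq_zero_iff] at h
    rcases h with h | h
    · exact hωC (by linear_combination -h)
    · exact (mul_ne_zero hφtC hψtC) h
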